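/- A 4-digit (σ,k)-permutiple [a_0; a_1, a_2, a_3] is symmetric if and only if it is perfect or its permuted digit string is the reversal of its digit string, i.e., a_{σ(j)} = a_{3−j} for all 0 ≤ j ≤ 3 (so that it is a k-reverse multiple). -/

import Mathlib

/-- Value of the finite simple continued fraction `[x₀; x₁, …, xₙ]`. -/
def cfv : List ℚ → ℚ
  | [] => 0
  | [x] => x
  | x :: y :: t => x + 1 / cfv (y :: t)

/-- The continuant `K(x₀, …, xₙ)`: `K() = 1`, `K(x₀) = x₀`, and the usual
three-term recurrence. -/
def cont : List ℕ → ℕ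
  | [] => 1
  | [x] => x
  | x :: y :: t => x * cont (y :: t) + cont t

/-- The digit string of `a`, as a list of rationals. -/
def digitsQ {N : ℕ} (a : Fin N → ℕ) : List ℚ := (List.ofFn a).map (fun x => (x : ℚ))

/-- `[a₀; a₁, …, aₙ]` (canonical: positive digits, last digit ≥ 2) is a
`(σ,k)`-permutiple: it equals `k` times the continued fraction of the permuted digits. -/
def IsPermutiple {n : ℕ} (a : Fin (n+1) → ℕ) (σ : Equiv.Perm (Fin (n+1))) (k : ℕ) : Prop :=
  (∀ j, 0 < a j) ∧ 2 ≤ a (Fin.last n) ∧ 1 < k ∧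
    cfv (digitsQ a) = k * cfv (digitsQ (a ∘ σ))

/-- A `(σ,k)`-permutiple is continuant-preserving if
`K(a₀,…,aₙ) = K(a_{σ(0)},…,a_{σ(n)})`. -/
def ContinuantPreserving {n : ℕ} (a : Fin (n+1) → ℕ) (σ : Equiv.Perm (Fin (n+1))) : Prop :=
  cont (List.ofFn a) = cont (List.ofFn (a ∘ σ))

/-- A `(σ,k)`-permutiple is perfect if `a_j = k·a_{σ(j)}` for even `j` and
`a_{σ(j)} = k·a_j` for odd `j`. -/
def IsPerfect {n : ℕ} (a : Fin (n+1) → ℕ) (σ : Equiv.Perm (Fin (n+1))) (k : ℕ) : Prop :=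
  ∀ j : Fin (n+1), (Even (j : ℕ) → a j = k * a (σ j)) ∧ (Odd (j : ℕ) → a (σ j) = k * a j)

/-- A `(σ,k)`-permutiple is symmetric if `a_j·a_{n−j} = a_{σ(j)}·a_{σ(n−j)}` for all `j`. -/
def IsSymmetric {n : ℕ} (a : Fin (n+1) → ℕ) (σ : Equiv.Perm (Fin (n+1))) : Prop :=
  ∀ j : Fin (n+1), a j * a j.rev = a (σ j) * a (σ j.rev)

/-- A Landess permutiple: a continuant-preserving `(σ,k)`-permutiple with
`q_{n−1} = q'_{n−1}` and `p_{n−1} = k·p'_{n−1}`. -/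
def IsLandess {n : ℕ} (a : Fin (n+1) → ℕ) (σ : Equiv.Perm (Fin (n+1))) (k : ℕ) : Prop :=
  IsPermutiple a σ k ∧ ContinuantPreserving a σ ∧
    cont ((List.ofFn a).tail.dropLast) = cont ((List.ofFn (a ∘ σ)).tail.dropLast) ∧
    cont ((List.ofFn a).dropLast) = k * cont ((List.ofFn (a ∘ σ)).dropLast)


set_option maxHeartbeats 4000000

private lemma cfv4_eq (x0 x1 x2 x3 : ℚ) (h1 : 0 < x1) (h2 : 0 < x2) (h3 : 0 < x3) :
    cfv [x0, x1, x2, x3] =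
      (x0*x1*x2*x3 + x0*x1 + x0*x3 + x2*x3 + 1) / (x1*x2*x3 + x1 + x3) := by
  have e3 : x3 ≠ 0 := ne_of_gt h3
  have h23 : 0 < x2 + 1/x3 := by positivity
  have e23 : x2 + 1/x3 ≠ 0 := ne_of_gt h23
  have h123 : 0 < x1 + 1/(x2 + 1/x3) := by positivity
  have e123 : x1 + 1/(x2 + 1/x3) ≠ 0 := ne_of_gt h123
  have hD : x1*x2*x3 + x1 + x3 ≠ 0 := by positivity
  show x0 + 1 / (x1 + 1 / (x2 + 1 / x3)) = _
  field_simp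
  ring

private lemma Eint (a0 a1 a2 a3 b0 b1 b2 b3 k : ℕ)
    (h1 : 0 < a1) (h2 : 0 < a2) (h3 : 0 < a3)
    (g1 : 0 < b1) (g2 : 0 < b2) (g3 : 0 < b3)
    (hE : cfv [(a0:ℚ), a1, a2, a3] = (k:ℚ) * cfv [(b0:ℚ), b1, b2, b3]) :
    (a0*a1*a2*a3 + a0*a1 + a0*a3 + a2*a3 + 1) * (b1*b2*b3 + b1 + b3)
      = k * ((b0*b1*b2*b3 + b0*b1 + b0*b3 + b2*b3 + 1) * (a1*a2*a3 + a1 + a3)) := by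
  have c1 : (0:ℚ) < a1 := by exact_mod_cast h1
  have c2 : (0:ℚ) < a2 := by exact_mod_cast h2
  have c3 : (0:ℚ) < a3 := by exact_mod_cast h3
  have d1 : (0:ℚ) < b1 := by exact_mod_cast g1
  have d2 : (0:ℚ) < b2 := by exact_mod_cast g2
  have d3 : (0:ℚ) < b3 := by exact_mod_cast g3
  rw [cfv4_eq _ _ _ _ c1 c2 c3, cfv4_eq _ _ _ _ d1 d2 d3] at hE
  have hDa : ((a1:ℚ)*a2*a3 + a1 + a3) ≠ 0 := by positivity
  have hDb : ((b1:ℚ)*b2*b3 + b1 + b3) ≠ 0 := by positivity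
  have hE2 : ((a0:ℚ)*a1*a2*a3 + a0*a1 + a0*a3 + a2*a3 + 1) / ((a1:ℚ)*a2*a3 + a1 + a3)
      = ((k:ℚ) * ((b0:ℚ)*b1*b2*b3 + b0*b1 + b0*b3 + b2*b3 + 1)) / ((b1:ℚ)*b2*b3 + b1 + b3) := by
    rw [hE]; ring
  have h4 := (div_eq_div_iff hDa hDb).mp hE2
  have h5 : ((a0:ℚ)*a1*a2*a3 + a0*a1 + a0*a3 + a2*a3 + 1) * (b1*b2*b3 + b1 + b3)
      = (k:ℚ) * (((b0:ℚ)*b1*b2*b3 + b0*b1 + b0*b3 + b2*b3 + 1) * (a1*a2*a3 + a1 + a3)) := by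
    rw [h4]; ring
  exact_mod_cast h5

private lemma pos_fac {x y : ℤ} (hy : 0 < y) (h : 0 < x * y) : 0 < x := by
  rcases mul_pos_iff.mp h with ⟨hx, _⟩ | ⟨_, hy'⟩
  · exact hx
  · omega

private lemma bnd1 (m Da Db ea eb k : ℤ) (hDa : 0 < Da) (hDb : 0 < Db)
    (hea : 0 < ea) (heb : 0 < eb) (hEA : ea + 1 ≤ Da) (hEB : eb + 1 ≤ Db) (hk : 2 ≤ k)
    (hmEq : m * (Da * Db) = k * (eb * Da) - ea * Db) : 0 ≤ m ∧ m ≤ k - 1 := by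
  constructor
  · have h1 : 0 < (m + 1) * (Da * Db) := by nlinarith [mul_pos heb hDa, mul_pos hDb (show (0:ℤ) < Da - ea by linarith)]
    have := pos_fac (mul_pos hDa hDb) h1
    omega
  · have h1 : 0 < (k - m) * (Da * Db) := by
      nlinarith [mul_pos hea hDb, mul_pos (mul_pos (show (0:ℤ) < k by omega) hDa) (show (0:ℤ) < Db - eb by linarith)]
    have := pos_fac (mul_pos hDa hDb) h1
    omega

private lemma abstrContra (a0 Da Db Nb Na k : ℤ) (hDa : 0 < Da) (hDb : 0 < Db)
    (h0 : 1 ≤ a0) (hk : 2 ≤ k)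
    (hNa : Na + 1 ≤ (a0+1)*Da) (hNb : a0*Db + 1 ≤ Nb)
    (hE : Na * Db = k * (Nb * Da)) : False := by
  have h1 : Na * Db ≤ ((a0+1)*Da - 1) * Db := mul_le_mul_of_nonneg_right (by linarith) hDb.le
  have hNbpos : 0 < Nb := by nlinarith [mul_pos (show (0:ℤ) < a0 by omega) hDb]
  have h2 : 2 * (Nb * Da) ≤ k * (Nb * Da) :=
    mul_le_mul_of_nonneg_right hk (mul_pos hNbpos hDa).le
  have h3 : 2 * ((a0*Db + 1) * Da) ≤ 2 * (Nb * Da) := by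
    have := mul_le_mul_of_nonneg_right hNb hDa.le
    linarith
  nlinarith [mul_pos hDa hDb, mul_nonneg (mul_nonneg (sub_nonneg.mpr h0) hDa.le) hDb.le]

private lemma coreContra (a0 a1 a2 a3 b0 b1 b2 b3 k : ℤ)
    (h0 : 1 ≤ a0) (h1 : 1 ≤ a1) (h2 : 1 ≤ a2) (h3 : 1 ≤ a3)
    (g1 : 1 ≤ b1) (g2 : 1 ≤ b2) (g3 : 1 ≤ b3)
    (hb : a0 ≤ b0) (hk : 2 ≤ k)
    (hE : (a0*a1*a2*a3 + a0*a1 + a0*a3 + a2*a3 + 1) * (b1*b2*b3 + b1 + b3)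
      = k * ((b0*b1*b2*b3 + b0*b1 + b0*b3 + b2*b3 + 1) * (a1*a2*a3 + a1 + a3))) : False := by
  have p1 : (0:ℤ) < a1*a2*a3 := mul_pos (mul_pos (by omega) (by omega)) (by omega)
  have q1 : (0:ℤ) < b1*b2*b3 := mul_pos (mul_pos (by omega) (by omega)) (by omega)
  have hDa : (0:ℤ) < a1*a2*a3 + a1 + a3 := by linarith
  have hDb : (0:ℤ) < b1*b2*b3 + b1 + b3 := by linarith
  apply abstrContra a0 (a1*a2*a3 + a1 + a3) (b1*b2*b3 + b1 + b3)
    (b0*b1*b2*b3 + b0*b1 + b0*b3 + b2*b3 + 1)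
    (a0*a1*a2*a3 + a0*a1 + a0*a3 + a2*a3 + 1) k hDa hDb h0 hk ?_ ?_ hE
  · nlinarith [mul_nonneg (mul_nonneg (sub_nonneg.mpr h1) (by linarith : (0:ℤ) ≤ a2)) (by linarith : (0:ℤ) ≤ a3)]
  · nlinarith [mul_nonneg (sub_nonneg.mpr hb) (le_of_lt hDb), mul_pos (show (0:ℤ) < b2 by omega) (show (0:ℤ) < b3 by omega)]

private lemma coreL1 (a0 a1 a2 a3 k : ℤ)
    (h0 : 1 ≤ a0) (h1 : 1 ≤ a1) (h2 : 1 ≤ a2) (h3 : 2 ≤ a3) (hk : 2 ≤ k)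
    (hE : (a0*a1*a2*a3 + a0*a1 + a0*a3 + a2*a3 + 1) * (a1*a2*a0 + a1 + a0)
      = k * ((a3*a1*a2*a0 + a3*a1 + a3*a0 + a2*a0 + 1) * (a1*a2*a3 + a1 + a3))) : a1 = a2 := by
  obtain ⟨m, hm⟩ : ∃ m, a0 = k*a3 + m := ⟨a0 - k*a3, by ring⟩
  subst hm
  have hDa : (0:ℤ) < a1*a2*a3 + a1 + a3 := by nlinarith [mul_pos (mul_pos (show (0:ℤ)<a1 by omega) (show (0:ℤ)<a2 by omega)) (show (0:ℤ)<a3 by omega)]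
  have hDb : (0:ℤ) < a1*a2*(k*a3+m) + a1 + (k*a3+m) := by nlinarith [mul_pos (mul_pos (show (0:ℤ)<a1 by omega) (show (0:ℤ)<a2 by omega)) (show (0:ℤ)<k*a3+m by omega)]
  have hea : (0:ℤ) < a2*a3 + 1 := by positivity
  have heb : (0:ℤ) < (k*a3+m)*a2 + 1 := by nlinarith [mul_pos (show (0:ℤ)<k*a3+m by omega) (show (0:ℤ)<a2 by omega)]
  have hEA : a2*a3 + 1 + 1 ≤ a1*a2*a3 + a1 + a3 := by
    nlinarith [mul_nonneg (mul_nonneg (show (0:ℤ) ≤ a1-1 by omega) (show (0:ℤ) ≤ a2 by omega)) (show (0:ℤ) ≤ a3 by omega)]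
  have hEB : (k*a3+m)*a2 + 1 + 1 ≤ a1*a2*(k*a3+m) + a1 + (k*a3+m) := by
    nlinarith [mul_nonneg (show (0:ℤ) ≤ a1-1 by omega) (mul_nonneg (show (0:ℤ) ≤ k*a3+m by omega) (show (0:ℤ) ≤ a2 by omega))]
  have hmEq : m * ((a1*a2*a3 + a1 + a3) * (a1*a2*(k*a3+m) + a1 + (k*a3+m)))
      = k * ((((k*a3+m))*a2 + 1) * (a1*a2*a3 + a1 + a3))
        - (a2*a3 + 1) * (a1*a2*(k*a3+m) + a1 + (k*a3+m)) := by linear_combination hE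
  obtain ⟨hm0, hmk⟩ := bnd1 _ _ _ _ _ _ hDa hDb hea heb hEA hEB hk hmEq
  rcases (by omega : m = 0 ∨ 1 ≤ m) with hm0' | hm1
  · subst hm0'
    exfalso
    have hz : (k-1) * (k * ((a1*a2*a3 + a1 + a3) * (a2*a3))) + (k-1) * (a1*(a2*a3+1)) = 0 := by
      linear_combination -hmEq
    have p1 : 0 < (k-1) * (k * ((a1*a2*a3 + a1 + a3) * (a2*a3))) :=
      mul_pos (by omega) (mul_pos (by omega) (mul_pos hDa (mul_pos (by omega) (by omega))))
    have p2 : 0 < (k-1) * (a1*(a2*a3+1)) := mul_pos (by omega) (mul_pos (by omega) hea)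
    linarith
  · have ha0a3 : a3 < k*a3 + m := by nlinarith
    have heq3 : ((k-1) * ((k*a3+m)*a2 + 1)) * (a1*a2*a3 + a1 + a3)
        - (m * (a1*a2*(k*a3+m) + a1 + (k*a3+m))) * (a1*a2*a3 + a1 + a3)
        = (k*a3 + m) - a3 := by linear_combination -hmEq
    have hlt2 : m * (a1*a2*(k*a3+m) + a1 + (k*a3+m)) < (k-1) * ((k*a3+m)*a2 + 1) :=
      lt_of_mul_lt_mul_right (by linarith) hDa.le
    have heq4 : m * (a1*a2*(k*a3+m) + a1 + (k*a3+m)) - (m*a1) * ((k*a3+m)*a2 + 1)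
        = m * (k*a3+m) := by ring
    have hlt3 : (m*a1) * ((k*a3+m)*a2 + 1) < (k-1) * ((k*a3+m)*a2 + 1) := by
      have := mul_pos (show (0:ℤ) < m by omega) (show (0:ℤ) < k*a3+m by omega)
      linarith
    have hma1 : m*a1 < k - 1 := lt_of_mul_lt_mul_right hlt3 heb.le
    obtain ⟨r, hr⟩ : ∃ r, k = m*a1 + r + 1 := ⟨k - 1 - m*a1, by ring⟩
    have hr1 : 1 ≤ r := by
      have : m*a1 = k - r - 1 := by linarith [hr]
      omega
    subst hr
    obtain ⟨t, ht⟩ : ∃ t, m = r*a2 + t := ⟨m - r*a2, by ring⟩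
    have keyEq : ((m*a1+r+1)*a3 + m) * (t*(a1*a2*a3 + a1 + a3) + 1)
        = r*(a1*a2*a3 + a1 + a3) + a3 := by
      linear_combination hmEq - (((m*a1+r+1)*a3 + m)*(a1*a2*a3+a1+a3))*ht
    have ha0pos : (0:ℤ) < (m*a1+r+1)*a3 + m := by positivity
    rcases (by omega : t ≤ -1 ∨ t = 0 ∨ 1 ≤ t) with htneg | ht0 | htpos
    · exfalso
      have l1 : t*(a1*a2*a3 + a1 + a3) + 1 ≤ 1 - (a1*a2*a3 + a1 + a3) := by
        have := mul_le_mul_of_nonneg_right htneg hDa.le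
        linarith
      have l2 : ((m*a1+r+1)*a3 + m) * (t*(a1*a2*a3 + a1 + a3) + 1) ≤ 0 :=
        mul_nonpos_of_nonneg_of_nonpos ha0pos.le (by linarith)
      have p3 : 0 < r*(a1*a2*a3 + a1 + a3) := mul_pos (by omega) hDa
      linarith
    · subst ht0
      have hfin : r*a1 = r*a2 := by linear_combination (-1) * keyEq + (a1*a3+1) * ht
      exact mul_left_cancel₀ (by omega : r ≠ 0) hfin
    · exfalso
      have ha0r : r + 1 ≤ (m*a1+r+1)*a3 + m := by
        nlinarith [mul_le_mul_of_nonneg_left h3 (show (0:ℤ) ≤ m*a1+r+1 by positivity)]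
      have l1 : (a1*a2*a3 + a1 + a3) + 1 ≤ t*(a1*a2*a3 + a1 + a3) + 1 := by
        have := mul_le_mul_of_nonneg_right htpos hDa.le
        linarith
      have l2 : ((m*a1+r+1)*a3 + m) * ((a1*a2*a3 + a1 + a3) + 1)
          ≤ ((m*a1+r+1)*a3 + m) * (t*(a1*a2*a3 + a1 + a3) + 1) :=
        mul_le_mul_of_nonneg_left l1 ha0pos.le
      nlinarith [keyEq, l2, mul_nonneg (show (0:ℤ) ≤ ((m*a1+r+1)*a3 + m) - r - 1 by linarith) hDa.le]

private lemma coreB1 (a0 a1 a2 a3 k : ℤ)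
    (h0 : 1 ≤ a0) (h1 : 1 ≤ a1) (h2 : 1 ≤ a2) (h3 : 2 ≤ a3) (hk : 2 ≤ k)
    (hS : a0*a3 = a1*a2)
    (hE : (a0*a1*a2*a3 + a0*a1 + a0*a3 + a2*a3 + 1) * (a0*a3*a2 + a0 + a2)
      = k * ((a1*a0*a3*a2 + a1*a0 + a1*a2 + a3*a2 + 1) * (a1*a2*a3 + a1 + a3))) :
    a0 = k*a1 ∧ a2 = k*a3 := by
  obtain ⟨m, hm⟩ : ∃ m, a0 = k*a1 + m := ⟨a0 - k*a1, by ring⟩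
  subst hm
  have ha0 : (1:ℤ) ≤ k*a1 + m := h0
  have hDa : (0:ℤ) < a1*a2*a3 + a1 + a3 := by nlinarith [mul_pos (mul_pos (show (0:ℤ)<a1 by omega) (show (0:ℤ)<a2 by omega)) (show (0:ℤ)<a3 by omega)]
  have hDb : (0:ℤ) < (k*a1+m)*a3*a2 + (k*a1+m) + a2 := by nlinarith [mul_pos (mul_pos (show (0:ℤ)<k*a1+m by omega) (show (0:ℤ)<a3 by omega)) (show (0:ℤ)<a2 by omega)]
  have hea : (0:ℤ) < a2*a3 + 1 := by positivity
  have hEA : a2*a3 + 1 + 1 ≤ a1*a2*a3 + a1 + a3 := by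
    nlinarith [mul_nonneg (mul_nonneg (show (0:ℤ) ≤ a1-1 by omega) (show (0:ℤ) ≤ a2 by omega)) (show (0:ℤ) ≤ a3 by omega)]
  have hEB : a2*a3 + 1 + 1 ≤ (k*a1+m)*a3*a2 + (k*a1+m) + a2 := by
    nlinarith [mul_nonneg (show (0:ℤ) ≤ (k*a1+m)-1 by omega) (mul_nonneg (show (0:ℤ) ≤ a2 by omega) (show (0:ℤ) ≤ a3 by omega))]
  have hmEq : m * ((a1*a2*a3 + a1 + a3) * ((k*a1+m)*a3*a2 + (k*a1+m) + a2))
      = k * ((a2*a3 + 1) * (a1*a2*a3 + a1 + a3))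
        - (a2*a3 + 1) * ((k*a1+m)*a3*a2 + (k*a1+m) + a2) := by linear_combination hE
  obtain ⟨hm0, hmk⟩ := bnd1 _ _ _ _ _ _ hDa hDb hea hea hEA hEB hk hmEq
  rcases (by omega : m = 0 ∨ 1 ≤ m) with hm0' | hm1
  · subst hm0'
    refine ⟨by ring, ?_⟩
    have hcan : (k*a3)*a1 = a2*a1 := by linear_combination hS
    exact (mul_right_cancel₀ (by omega : a1 ≠ 0) hcan).symm
  · exfalso
    have key : m * ((a1*a2*a3 + a1 + a3) * ((k*a1+m)*a3*a2 + (k*a1+m) + a2) + (a2*a3+1)*(a2*a3+1))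
        = (a2*a3+1) * (k*a3 - a2) := by linear_combination hmEq
    have ha01 : k + 1 ≤ (k*a1+m)*a1 := by nlinarith [mul_nonneg (show (0:ℤ) ≤ k by omega) (mul_nonneg (show (0:ℤ) ≤ a1-1 by omega) (show (0:ℤ) ≤ a1+1 by omega))]
    have hlb : (k+1) * ((a2*a3+1)*(a2*a3+1)) ≤ (a1*a2*a3 + a1 + a3) * ((k*a1+m)*a3*a2 + (k*a1+m) + a2) := by
      nlinarith [mul_le_mul_of_nonneg_right ha01 (mul_pos hea hea).le,
        mul_nonneg (mul_nonneg (show (0:ℤ) ≤ a1 by omega) hea.le) (show (0:ℤ) ≤ a2 by omega),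
        mul_nonneg (show (0:ℤ) ≤ a3 by omega) (mul_nonneg (show (0:ℤ) ≤ k*a1+m by omega) hea.le),
        mul_nonneg (show (0:ℤ) ≤ a3 by omega) (show (0:ℤ) ≤ a2 by omega)]
    have hub : (a2*a3+1) * (k*a3 - a2) < k * ((a2*a3+1)*(a2*a3+1)) := by
      nlinarith [mul_pos (mul_pos (show (0:ℤ)<k by omega) hea) (show (0:ℤ) < (a2*a3+1) - a3 by nlinarith [mul_nonneg (show (0:ℤ) ≤ a2-1 by omega) (show (0:ℤ) ≤ a3 by omega)]),
        mul_pos hea (show (0:ℤ) < a2 by omega)]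
    nlinarith [key, hlb, hub, mul_pos hea hea, mul_pos hDa hDb,
      mul_le_mul_of_nonneg_right (show (1:ℤ) ≤ m by omega) (show (0:ℤ) ≤ (a1*a2*a3 + a1 + a3) * ((k*a1+m)*a3*a2 + (k*a1+m) + a2) + (a2*a3+1)*(a2*a3+1) by positivity)]

private lemma coreB3 (a0 a1 a2 a3 k : ℤ)
    (h0 : 1 ≤ a0) (h1 : 1 ≤ a1) (h2 : 1 ≤ a2) (h3 : 2 ≤ a3) (hk : 2 ≤ k)
    (hS : a0*a3 = a1*a2)
    (hE : (a0*a1*a2*a3 + a0*a1 + a0*a3 + a2*a3 + 1) * (a0*a3*a1 + a0 + a1)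
      = k * ((a2*a0*a3*a1 + a2*a0 + a2*a1 + a3*a1 + 1) * (a1*a2*a3 + a1 + a3))) :
    a0 = k*a2 ∧ a1 = k*a3 ∧ a1 = a2 := by
  obtain ⟨m, hm⟩ : ∃ m, a0 = k*a2 + m := ⟨a0 - k*a2, by ring⟩
  subst hm
  have ha0 : (1:ℤ) ≤ k*a2 + m := h0
  have hDa : (0:ℤ) < a1*a2*a3 + a1 + a3 := by nlinarith [mul_pos (mul_pos (show (0:ℤ)<a1 by omega) (show (0:ℤ)<a2 by omega)) (show (0:ℤ)<a3 by omega)]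
  have hDb : (0:ℤ) < (k*a2+m)*a3*a1 + (k*a2+m) + a1 := by nlinarith [mul_pos (mul_pos (show (0:ℤ)<k*a2+m by omega) (show (0:ℤ)<a3 by omega)) (show (0:ℤ)<a1 by omega)]
  have hea : (0:ℤ) < a2*a3 + 1 := by positivity
  have heb : (0:ℤ) < a3*a1 + 1 := by positivity
  have hEA : a2*a3 + 1 + 1 ≤ a1*a2*a3 + a1 + a3 := by
    nlinarith [mul_nonneg (mul_nonneg (show (0:ℤ) ≤ a1-1 by omega) (show (0:ℤ) ≤ a2 by omega)) (show (0:ℤ) ≤ a3 by omega)]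
  have hEB : a3*a1 + 1 + 1 ≤ (k*a2+m)*a3*a1 + (k*a2+m) + a1 := by
    nlinarith [mul_nonneg (show (0:ℤ) ≤ (k*a2+m)-1 by omega) (mul_nonneg (show (0:ℤ) ≤ a3 by omega) (show (0:ℤ) ≤ a1 by omega))]
  have hmEq : m * ((a1*a2*a3 + a1 + a3) * ((k*a2+m)*a3*a1 + (k*a2+m) + a1))
      = k * ((a3*a1 + 1) * (a1*a2*a3 + a1 + a3))
        - (a2*a3 + 1) * ((k*a2+m)*a3*a1 + (k*a2+m) + a1) := by linear_combination hE
  obtain ⟨hm0, hmk⟩ := bnd1 _ _ _ _ _ _ hDa hDb hea heb hEA hEB hk hmEq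
  rcases (by omega : m = 0 ∨ 1 ≤ m) with hm0' | hm1
  · subst hm0'
    have hcan : (k*a3)*a2 = a1*a2 := by linear_combination hS
    have ha1 : a1 = k*a3 := (mul_right_cancel₀ (by omega : a2 ≠ 0) hcan).symm
    subst ha1
    have hfac : (k*a3 - a2) * (k*(k*a2*a3^3 + a3*(k*a3+a2) + a3^2 + 1)) = 0 := by
      linear_combination -hmEq
    have hgpos : (0:ℤ) < k*(k*a2*a3^3 + a3*(k*a3+a2) + a3^2 + 1) := by
      have : (0:ℤ) < k*a2*a3^3 := by positivity
      nlinarith [mul_pos (mul_pos (show (0:ℤ)<k by omega) (show (0:ℤ)<a3 by omega)) (show (0:ℤ)<a3 by omega), mul_pos (show (0:ℤ)<a3 by omega) (show (0:ℤ)<a2 by omega), mul_pos (show (0:ℤ)<a3 by omega) (show (0:ℤ)<a3 by omega)]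
    have h2eq : a2 = k*a3 := by
      rcases mul_eq_zero.mp hfac with h | h
      · omega
      · omega
    exact ⟨by omega, rfl, by omega⟩
  · exfalso
    have e1 : ((a1*a2*a3 + a1 + a3) * ((k*a2+m)*a3*a1 + (k*a2+m) + a1))
        ≤ m * ((a1*a2*a3 + a1 + a3) * ((k*a2+m)*a3*a1 + (k*a2+m) + a1)) := by
      nlinarith [mul_pos hDa hDb]
    have e2 : 0 < (a2*a3 + 1) * ((k*a2+m)*a3*a1 + (k*a2+m) + a1) := mul_pos hea hDb
    have e3 : ((k*a2+m)*a3*a1 + (k*a2+m) + a1) * (a1*a2*a3 + a1 + a3)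
        < (k*(a3*a1+1)) * (a1*a2*a3 + a1 + a3) := by nlinarith
    have e4 : (k*a2+m)*a3*a1 + (k*a2+m) + a1 < k*(a3*a1+1) := lt_of_mul_lt_mul_right e3 hDa.le
    have hq : (0:ℤ) ≤ k*(a2-1) := mul_nonneg (by omega) (by omega)
    nlinarith [mul_nonneg (mul_nonneg (show (0:ℤ) ≤ k*(a2-1)+m by linarith) (show (0:ℤ) ≤ a3 by omega)) (show (0:ℤ) ≤ a1 by omega), hq]

private lemma b2wneg (a1 a2 a3 s m ea eb X P : ℤ)
    (h1 : 1 ≤ a1) (h2 : 1 ≤ a2) (h3 : 2 ≤ a3) (hm : 1 ≤ m) (hs : 1 ≤ s)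
    (hea : ea = a2*a3+1) (hX : X = (s*a1 - a3)*ea + s*a3)
    (hw : s*a1 ≤ a3)
    (heq : eb * X = a2*(ea*(m*a1+1)) + m*(a2*a3))
    (hq : a3*(a3*eb) = a1*(a2*(a2*a3)) + a3*a3)
    (hP : a1*(a2*(a2*a3)) = P) (hPbig : 3*(a3*a3) ≤ P)
    (hebpos : 0 < eb) : False := by
  have hXle : X ≤ s*a3 := by nlinarith [mul_nonneg (show (0:ℤ) ≤ a3 - s*a1 by linarith) (show (0:ℤ) ≤ ea by nlinarith)]
  have l1 : a1*(eb*X) ≤ (s*a1)*(a3*eb) := by nlinarith [mul_pos (show (0:ℤ) < a1 by omega) hebpos]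
  have l2 : (s*a1)*(a3*eb) ≤ a3*(a3*eb) := by
    have : (0:ℤ) < a3*eb := mul_pos (by omega) hebpos
    nlinarith
  have l3 : 2*P + 2*(a1*a2) ≤ a1*(a2*(ea*(m*a1+1)) + m*(a2*a3)) := by
    nlinarith [mul_nonneg (mul_nonneg (show (0:ℤ) ≤ a1 by omega) (show (0:ℤ) ≤ a2 by omega)) (mul_nonneg (show (0:ℤ) ≤ ea by nlinarith) (show (0:ℤ) ≤ m*a1 - 1 by nlinarith)),
      mul_nonneg (mul_nonneg (show (0:ℤ) ≤ a1 by omega) (show (0:ℤ) ≤ a2*a3 by positivity)) (show (0:ℤ) ≤ m - 1 by omega),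
      mul_nonneg (show (0:ℤ) ≤ a1*a2 by positivity) (show (0:ℤ) ≤ ea - a2*a3 by nlinarith)]
  have l4 : a1*(eb*X) = a1*(a2*(ea*(m*a1+1)) + m*(a2*a3)) := by rw [heq]
  nlinarith [mul_pos (show (0:ℤ) < a1 by omega) (show (0:ℤ) < a2 by omega)]

private lemma b2wpos (a1 a2 a3 s m ea eb X a0 : ℤ)
    (h1 : 1 ≤ a1) (h2 : 1 ≤ a2) (h3 : 2 ≤ a3) (hm : 1 ≤ m) (hs : 1 ≤ s)
    (hea : ea = a2*a3+1) (hX : X = (s*a1 - a3)*ea + s*a3)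
    (hw : a3 + 1 ≤ s*a1)
    (heq : eb * X = a2*(ea*(m*a1+1)) + m*(a2*a3))
    (ha0 : a0 = (m*a3+s)*a1 + m) (heb : eb = a0*a2 + 1)
    (hebpos : 0 < eb) : False := by
  have heapos : (0:ℤ) < ea := by nlinarith
  have hXge : ea + s*a3 ≤ X := by nlinarith [mul_nonneg (show (0:ℤ) ≤ s*a1 - a3 - 1 by linarith) heapos.le]
  have l1 : eb*(ea + s*a3) ≤ eb * X := by nlinarith
  have ha0big : m*a1 + m + 2 ≤ a0 := by
    nlinarith [mul_nonneg (mul_nonneg (show (0:ℤ) ≤ m by omega) (show (0:ℤ) ≤ a1 by omega)) (show (0:ℤ) ≤ a3 - 2 by omega),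
      mul_nonneg (show (0:ℤ) ≤ s*a1 - 1 by nlinarith [mul_pos (show (0:ℤ)<s by omega) (show (0:ℤ)<a1 by omega)]) (show (0:ℤ) ≤ (1:ℤ) by norm_num)]
  have l2 : a2*(ea*(m*a1+1)) + m*(a2*a3) < ea*eb := by
    nlinarith [mul_pos heapos (show (0:ℤ) < a2 by omega),
      mul_nonneg (mul_nonneg (show (0:ℤ) ≤ a2 by omega) heapos.le) (show (0:ℤ) ≤ m by omega),
      mul_nonneg (show (0:ℤ) ≤ a2*m by positivity) (show (0:ℤ) ≤ ea - a3 by nlinarith),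
      mul_le_mul_of_nonneg_right ha0big (mul_nonneg (show (0:ℤ) ≤ a2 by omega) heapos.le)]
  have l3 : eb*(s*a3) > 0 := by positivity
  nlinarith [mul_pos hebpos heapos]

private lemma coreB2 (a0 a1 a2 a3 k : ℤ)
    (h0 : 1 ≤ a0) (h1 : 1 ≤ a1) (h2 : 1 ≤ a2) (h3 : 2 ≤ a3) (hk : 2 ≤ k)
    (hS : a0*a3 = a1*a2)
    (hE : (a0*a1*a2*a3 + a0*a1 + a0*a3 + a2*a3 + 1) * (a3*a0*a2 + a3 + a2)
      = k * ((a1*a3*a0*a2 + a1*a3 + a1*a2 + a0*a2 + 1) * (a1*a2*a3 + a1 + a3))) :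
    a0 = k*a1 ∧ a0 = a3 ∧ a2 = k*a0 := by
  obtain ⟨m, hm⟩ : ∃ m, a0 = k*a1 + m := ⟨a0 - k*a1, by ring⟩
  subst hm
  have ha0 : (1:ℤ) ≤ k*a1 + m := h0
  have hDa : (0:ℤ) < a1*a2*a3 + a1 + a3 := by nlinarith [mul_pos (mul_pos (show (0:ℤ)<a1 by omega) (show (0:ℤ)<a2 by omega)) (show (0:ℤ)<a3 by omega)]
  have hDb : (0:ℤ) < a3*(k*a1+m)*a2 + a3 + a2 := by nlinarith [mul_pos (mul_pos (show (0:ℤ)<a3 by omega) (show (0:ℤ)<k*a1+m by omega)) (show (0:ℤ)<a2 by omega)]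
  have hea : (0:ℤ) < a2*a3 + 1 := by positivity
  have heb : (0:ℤ) < (k*a1+m)*a2 + 1 := by nlinarith [mul_pos (show (0:ℤ)<k*a1+m by omega) (show (0:ℤ)<a2 by omega)]
  have hEA : a2*a3 + 1 + 1 ≤ a1*a2*a3 + a1 + a3 := by
    nlinarith [mul_nonneg (mul_nonneg (show (0:ℤ) ≤ a1-1 by omega) (show (0:ℤ) ≤ a2 by omega)) (show (0:ℤ) ≤ a3 by omega)]
  have hEB : (k*a1+m)*a2 + 1 + 1 ≤ a3*(k*a1+m)*a2 + a3 + a2 := by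
    nlinarith [mul_nonneg (mul_nonneg (show (0:ℤ) ≤ a3-1 by omega) (show (0:ℤ) ≤ k*a1+m by omega)) (show (0:ℤ) ≤ a2 by omega)]
  have hmEq : m * ((a1*a2*a3 + a1 + a3) * (a3*(k*a1+m)*a2 + a3 + a2))
      = k * ((((k*a1+m)*a2 + 1)) * (a1*a2*a3 + a1 + a3))
        - (a2*a3 + 1) * (a3*(k*a1+m)*a2 + a3 + a2) := by linear_combination hE
  obtain ⟨hm0, hmk⟩ := bnd1 _ _ _ _ _ _ hDa hDb hea heb hEA hEB hk hmEq
  rcases (by omega : m = 0 ∨ 1 ≤ m) with hm0' | hm1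
  · subst hm0'
    have hcan : (k*a3)*a1 = a2*a1 := by linear_combination hS
    have ha2 : a2 = k*a3 := (mul_right_cancel₀ (by omega : a1 ≠ 0) hcan).symm
    subst ha2
    have hfac : (k*a1 - a3) * (a1*a3^3*k^3 + a1*a3*k^2 + a3^2*k^2 + a3^2*k + 1) = 0 := by
      linear_combination -hmEq
    have hgpos : (0:ℤ) < a1*a3^3*k^3 + a1*a3*k^2 + a3^2*k^2 + a3^2*k + 1 := by positivity
    have h2eq : a3 = k*a1 := by
      rcases mul_eq_zero.mp hfac with h | h
      · omega
      · omega
    refine ⟨by ring, by omega, by rw [h2eq]; ring⟩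
  · exfalso
    obtain ⟨s, hs⟩ : ∃ s, k = m*a3 + s := ⟨k - m*a3, by ring⟩
    subst hs
    have hXeq : (((m*a3+s)*a1+m)*a2 + 1) * ((s*a1 - a3)*(a2*a3+1) + s*a3)
        = a2*((a2*a3+1)*(m*a1+1)) + m*(a2*a3) := by linear_combination -hmEq
    have hRpos : 0 < a2*((a2*a3+1)*(m*a1+1)) + m*(a2*a3) := by
      nlinarith [mul_pos (show (0:ℤ) < a2 by omega) (mul_pos hea (show (0:ℤ) < m*a1+1 by nlinarith [mul_pos (show (0:ℤ) < m by omega) (show (0:ℤ)<a1 by omega)])),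
        mul_pos (show (0:ℤ) < m by omega) (mul_pos (show (0:ℤ)<a2 by omega) (show (0:ℤ)<a3 by omega))]
    have hXpos : 0 < (s*a1 - a3)*(a2*a3+1) + s*a3 := by
      apply pos_fac heb
      rw [mul_comm]
      rw [hXeq]
      exact hRpos
    have hs1 : 1 ≤ s := by
      by_contra hcon
      push_neg at hcon
      have hsa1 : s*a1 ≤ 0 := mul_nonpos_of_nonpos_of_nonneg (by omega) (by omega)
      have hsa3 : s*a3 ≤ 0 := mul_nonpos_of_nonpos_of_nonneg (by omega) (by omega)
      nlinarith [mul_le_mul_of_nonneg_right (show s*a1 - a3 ≤ -2 by omega) hea.le]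
    rcases le_or_gt (s*a1) a3 with hw | hw
    · have hq : a3*(a3*(((m*a3+s)*a1+m)*a2 + 1)) = a1*(a2*(a2*a3)) + a3*a3 := by
        linear_combination (a3*a2)*hS
      have hP2 : a1*(a2*(a2*a3)) = (((m*a3+s)*a1+m))*(a2*(a3*a3)) := by
        linear_combination (-(a2*a3))*hS
      have hPbig : 3*(a3*a3) ≤ a1*(a2*(a2*a3)) := by
        rw [hP2]
        have hf : (3:ℤ) ≤ ((m*a3+s)*a1+m) := by nlinarith [mul_le_mul (show (2:ℤ) ≤ m*a3 + s by nlinarith [mul_pos (show (0:ℤ) < m by omega) (show (0:ℤ)<a3 by omega)]) h1 (by norm_num) (by nlinarith [mul_pos (show (0:ℤ) < m by omega) (show (0:ℤ)<a3 by omega)])]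
        nlinarith [mul_pos (show (0:ℤ)<a2 by omega) (mul_pos (show (0:ℤ)<a3 by omega) (show (0:ℤ)<a3 by omega)), mul_nonneg (show (0:ℤ) ≤ a2-1 by omega) (mul_nonneg (show (0:ℤ)≤a3 by omega) (show (0:ℤ)≤a3 by omega))]
      exact b2wneg a1 a2 a3 s m (a2*a3+1) (((m*a3+s)*a1+m)*a2 + 1)
        ((s*a1 - a3)*(a2*a3+1) + s*a3) (a1*(a2*(a2*a3)))
        h1 h2 h3 hm1 hs1 rfl rfl hw hXeq hq rfl hPbig heb
    · exact b2wpos a1 a2 a3 s m (a2*a3+1) (((m*a3+s)*a1+m)*a2 + 1)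
        ((s*a1 - a3)*(a2*a3+1) + s*a3) ((m*a3+s)*a1+m)
        h1 h2 h3 hm1 hs1 rfl rfl (by omega) hXeq rfl rfl heb

private lemma b4s2 (s Da eb m a1 a3 ea : ℤ) (hs2 : 2 ≤ s) (hm : 1 ≤ m) (h1 : 1 ≤ a1)
    (heapos : 0 < ea) (hDapos : 0 < Da) (hebpos : 0 < eb)
    (hDa3 : a3*ea + 1 ≤ Da) (hebbig : (m+2)*a1 + 1 ≤ eb) (hDaea : ea + 2 ≤ Da)
    (hEq : s*(Da*eb) = m*a1*Da + a3*(ea*eb) + a1*ea) : False := by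
  nlinarith [mul_le_mul_of_nonneg_right hDa3 hebpos.le,
    mul_le_mul_of_nonneg_left hebbig hDapos.le,
    mul_le_mul_of_nonneg_left hDaea (show (0:ℤ) ≤ a1 by omega),
    mul_pos hDapos hebpos,
    mul_le_mul_of_nonneg_right (show (2:ℤ) ≤ s by omega) (mul_pos hDapos hebpos).le]

private lemma b4fin (A1 EA EB Q u m a3 a0 : ℤ)
    (hA1 : 1 ≤ A1) (hEA : 3 ≤ EA) (hm : 1 ≤ m) (h3 : 2 ≤ a3) (hu : 1 ≤ u) (ha0 : 1 ≤ a0)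
    (hEAa3 : a3 + 1 ≤ EA)
    (hEB : EB = a0*A1 + 1)
    (hQ : a0*u = Q) (hQ2 : m*A1 = Q) (hQ3 : m*a3 + 2 ≤ Q)
    (hfin : EB*(u*(EA*EA) + a3) = m*(A1*(A1*EA)) + m*(A1*a3) + A1*EA) : False := by
  have hQpos : 0 < Q := by nlinarith [mul_pos (show (0:ℤ) < m by omega) (show (0:ℤ)<a3 by omega)]
  have hrhs1 : m*(A1*(A1*EA)) = Q*(A1*EA) := by linear_combination (A1*EA)*hQ2
  have hrhs2 : m*(A1*a3) = Q*a3 := by linear_combination a3*hQ2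
  rw [hrhs1, hrhs2, hEB] at hfin
  have l1 : A1*(Q*(EA*EA)) + u*(EA*EA) + a3 ≤ (a0*A1 + 1)*(u*(EA*EA) + a3) := by
    have : A1*((a0*u)*(EA*EA)) = A1*(Q*(EA*EA)) := by rw [hQ]
    nlinarith [mul_nonneg (mul_nonneg (show (0:ℤ) ≤ a0 by omega) (show (0:ℤ) ≤ A1 by omega)) (show (0:ℤ) ≤ a3 by omega), this]
  have p1 : Q*(a3+1) ≤ Q*(A1*EA) := by
    have : a3 + 1 ≤ A1*EA := by nlinarith
    nlinarith
  have p2 : 0 < A1*EA := by positivity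
  nlinarith [mul_le_mul_of_nonneg_left (show (2:ℤ) ≤ EA - 1 by omega) (mul_nonneg (mul_nonneg hQpos.le (show (0:ℤ) ≤ A1 by omega)) (show (0:ℤ) ≤ EA by omega)),
    mul_pos (mul_pos hQpos p2) (show (0:ℤ) < EA - 1 by omega),
    mul_nonneg (show (0:ℤ) ≤ u by omega) (mul_nonneg (show (0:ℤ) ≤ EA by omega) (show (0:ℤ) ≤ EA by omega)),
    mul_le_mul_of_nonneg_left hQ3 p2.le]

private lemma coreB4 (a0 a1 a2 a3 k : ℤ)
    (h0 : 1 ≤ a0) (h1 : 1 ≤ a1) (h2 : 1 ≤ a2) (h3 : 2 ≤ a3) (hk : 2 ≤ k)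
    (hS : a0*a3 = a1*a2)
    (hE : (a0*a1*a2*a3 + a0*a1 + a0*a3 + a2*a3 + 1) * (a3*a0*a1 + a3 + a1)
      = k * ((a2*a3*a0*a1 + a2*a3 + a2*a1 + a0*a1 + 1) * (a1*a2*a3 + a1 + a3))) : False := by
  obtain ⟨m, hm⟩ : ∃ m, a0 = k*a2 + m := ⟨a0 - k*a2, by ring⟩
  subst hm
  have ha0 : (1:ℤ) ≤ k*a2 + m := h0
  have hDa : (0:ℤ) < a1*a2*a3 + a1 + a3 := by nlinarith [mul_pos (mul_pos (show (0:ℤ)<a1 by omega) (show (0:ℤ)<a2 by omega)) (show (0:ℤ)<a3 by omega)]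
  have hDb : (0:ℤ) < a3*(k*a2+m)*a1 + a3 + a1 := by nlinarith [mul_pos (mul_pos (show (0:ℤ)<a3 by omega) (show (0:ℤ)<k*a2+m by omega)) (show (0:ℤ)<a1 by omega)]
  have hea : (0:ℤ) < a2*a3 + 1 := by positivity
  have heb : (0:ℤ) < (k*a2+m)*a1 + 1 := by nlinarith [mul_pos (show (0:ℤ)<k*a2+m by omega) (show (0:ℤ)<a1 by omega)]
  have hEA : a2*a3 + 1 + 1 ≤ a1*a2*a3 + a1 + a3 := by
    nlinarith [mul_nonneg (mul_nonneg (show (0:ℤ) ≤ a1-1 by omega) (show (0:ℤ) ≤ a2 by omega)) (show (0:ℤ) ≤ a3 by omega)]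
  have hEB : (k*a2+m)*a1 + 1 + 1 ≤ a3*(k*a2+m)*a1 + a3 + a1 := by
    nlinarith [mul_nonneg (mul_nonneg (show (0:ℤ) ≤ a3-1 by omega) (show (0:ℤ) ≤ k*a2+m by omega)) (show (0:ℤ) ≤ a1 by omega)]
  have hmEq : m * ((a1*a2*a3 + a1 + a3) * (a3*(k*a2+m)*a1 + a3 + a1))
      = k * ((((k*a2+m)*a1 + 1)) * (a1*a2*a3 + a1 + a3))
        - (a2*a3 + 1) * (a3*(k*a2+m)*a1 + a3 + a1) := by linear_combination hE
  obtain ⟨hm0, hmk⟩ := bnd1 _ _ _ _ _ _ hDa hDb hea heb hEA hEB hk hmEq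
  rcases (by omega : m = 0 ∨ 1 ≤ m) with hm0' | hm1
  · subst hm0'
    have hcan : (k*a3)*a2 = a1*a2 := by linear_combination hS
    have ha1 : a1 = k*a3 := (mul_right_cancel₀ (by omega : a2 ≠ 0) hcan).symm
    subst ha1
    have hD : k * ((((k*a2+0)*(k*a3) + 1)) * ((k*a3)*a2*a3 + (k*a3) + a3))
        - (a2*a3 + 1) * (a3*(k*a2+0)*(k*a3) + a3 + (k*a3))
        = a3*(k^2-1) + a2*(a3*a3)*((k+1)*(k^3-1)) + (a2*a2)*(a3*(a3*a3))*(k^2*(k^2-1)) := by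
      ring
    have p1 : (0:ℤ) < a3*(k^2-1) := by nlinarith
    have p2 : (0:ℤ) < a2*(a3*a3)*((k+1)*(k^3-1)) := by
      have : (0:ℤ) < k^3 - 1 := by nlinarith
      positivity
    have p3 : (0:ℤ) < (a2*a2)*(a3*(a3*a3))*(k^2*(k^2-1)) := by
      have : (0:ℤ) < k^2 - 1 := by nlinarith
      positivity
    nlinarith [hmEq, hD]
  · obtain ⟨s, hs⟩ : ∃ s, k = m*a3 + s := ⟨k - m*a3, by ring⟩
    subst hs
    have c1 : (m*(a3*((m*a3+s)*a2+m)*a1 + a3 + a1)) * (a1*a2*a3 + a1 + a3)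
        < ((m*a3+s)*(((m*a3+s)*a2+m)*a1 + 1)) * (a1*a2*a3 + a1 + a3) := by
      nlinarith [hmEq, mul_pos hea hDb]
    have hlt : m*(a3*((m*a3+s)*a2+m)*a1 + a3 + a1) < (m*a3+s)*(((m*a3+s)*a2+m)*a1 + 1) :=
      lt_of_mul_lt_mul_right c1 hDa.le
    have hs1 : 1 ≤ s := by
      have hsb : 0 < s*((((m*a3+s)*a2+m))*a1 + 1) := by
        nlinarith [mul_pos (show (0:ℤ) < m by omega) (show (0:ℤ) < a1 by omega),
          mul_pos (mul_pos (show (0:ℤ) < m by omega) (show (0:ℤ) < a3 by omega)) heb]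
      exact pos_fac heb hsb
    have hupos : 0 < (a1 - (m*a3+s)*a3) * a2 := by
      have huq : (a1 - (m*a3+s)*a3) * a2 = m*a3 := by linear_combination -hS
      rw [huq]
      exact mul_pos (by omega) (by omega)
    have hu1 : 0 < a1 - (m*a3+s)*a3 := pos_fac (by omega) hupos
    rcases (by omega : 2 ≤ s ∨ s = 1) with hs2 | hs1'
    · have B4EQ : s*((a1*a2*a3 + a1 + a3)*(((m*a3+s)*a2+m)*a1 + 1))
          = m*a1*(a1*a2*a3 + a1 + a3) + a3*((a2*a3+1)*(((m*a3+s)*a2+m)*a1 + 1))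
            + a1*(a2*a3+1) := by linear_combination -hmEq
      have hka3 : (m*a3+s)*a3 ≥ 2*a3 + 2 := by
        nlinarith [mul_nonneg (mul_nonneg (show (0:ℤ) ≤ m-1 by omega) (show (0:ℤ) ≤ a3 by omega)) (show (0:ℤ) ≤ a3 by omega)]
      have ha13 : 2*a3 + 3 ≤ a1 := by omega
      have hDa3 : a3*(a2*a3+1) + 1 ≤ a1*a2*a3 + a1 + a3 := by
        nlinarith [mul_nonneg (show (0:ℤ) ≤ a1 - a3 - 1 by omega) hea.le]
      have hebbig : (m+2)*a1 + 1 ≤ ((m*a3+s)*a2+m)*a1 + 1 := by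
        have : m + 2 ≤ (m*a3+s)*a2 + m := by
          nlinarith [mul_le_mul (show (2:ℤ) ≤ m*a3+s by nlinarith [mul_pos (show (0:ℤ) < m by omega) (show (0:ℤ)<a3 by omega)]) h2 (by norm_num) (show (0:ℤ) ≤ m*a3+s by nlinarith [mul_pos (show (0:ℤ) < m by omega) (show (0:ℤ)<a3 by omega)])]
        nlinarith [mul_le_mul_of_nonneg_right this (show (0:ℤ) ≤ a1 by omega)]
      have hDaea : (a2*a3+1) + 2 ≤ a1*a2*a3 + a1 + a3 := by
        nlinarith [mul_nonneg (mul_nonneg (show (0:ℤ) ≤ a1-1 by omega) (show (0:ℤ) ≤ a2 by omega)) (show (0:ℤ) ≤ a3 by omega)]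
      exact b4s2 s (a1*a2*a3 + a1 + a3) (((m*a3+s)*a2+m)*a1 + 1) m a1 a3 (a2*a3+1)
        hs2 hm1 h1 hea hDa heb hDa3 hebbig hDaea B4EQ
    · subst hs1'
      obtain ⟨u, hu⟩ : ∃ u, a1 = (m*a3+1)*a3 + u := ⟨a1 - (m*a3+1)*a3, by ring⟩
      subst hu
      have hu1' : 1 ≤ u := by omega
      have hmu : a2*u = m*a3 := by linear_combination -hS
      have B4FIN : ((((m*a3+1)*a2+m)*((m*a3+1)*a3+u)) + 1)*(u*((a2*a3+1)*(a2*a3+1)) + a3)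
          = m*(((m*a3+1)*a3+u)*(((m*a3+1)*a3+u)*(a2*a3+1)))
            + m*(((m*a3+1)*a3+u)*a3) + ((m*a3+1)*a3+u)*(a2*a3+1) := by
        linear_combination -hmEq + (((((m*a3+1)*a2+m)*((m*a3+1)*a3+u)) + 1)*(a2*a3+1)*a3)*hmu
      have hQ : ((m*a3+1)*a2+m)*u = m*(m*(a3*a3)) + m*a3 + m*u := by
        linear_combination (m*a3+1)*hmu
      have hQ2 : m*((m*a3+1)*a3+u) = m*(m*(a3*a3)) + m*a3 + m*u := by ring
      have hQ3 : m*a3 + 2 ≤ m*(m*(a3*a3)) + m*a3 + m*u := by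
        nlinarith [mul_pos (show (0:ℤ) < m by omega) (show (0:ℤ)<u by omega),
          mul_pos (mul_pos (show (0:ℤ) < m by omega) (show (0:ℤ) < m by omega)) (mul_pos (show (0:ℤ)<a3 by omega) (show (0:ℤ)<a3 by omega))]
      exact b4fin ((m*a3+1)*a3+u) (a2*a3+1) ((((m*a3+1)*a2+m)*((m*a3+1)*a3+u)) + 1)
        (m*(m*(a3*a3)) + m*a3 + m*u) u m a3 ((m*a3+1)*a2+m)
        (by nlinarith [mul_pos (show (0:ℤ) < m by omega) (mul_pos (show (0:ℤ)<a3 by omega) (show (0:ℤ)<a3 by omega))])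
        (by nlinarith [mul_pos (show (0:ℤ)<a2 by omega) (show (0:ℤ)<a3 by omega)])
        hm1 h3 hu1' (by nlinarith [mul_pos (mul_pos (show (0:ℤ) < m by omega) (show (0:ℤ)<a3 by omega)) (show (0:ℤ)<a2 by omega)])
        (by nlinarith [mul_nonneg (show (0:ℤ) ≤ a2-1 by omega) (show (0:ℤ) ≤ a3 by omega)])
        rfl hQ hQ2 hQ3 B4FIN

private lemma fin4 (j : Fin 4) : j = 0 ∨ j = 1 ∨ j = 2 ∨ j = 3 := by
  revert j; decide

private lemma perm4 (σ : Equiv.Perm (Fin 4)) :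
    (σ 0 = 0 ∧ σ 1 = 1 ∧ σ 2 = 2 ∧ σ 3 = 3) ∨
    (σ 0 = 0 ∧ σ 1 = 1 ∧ σ 2 = 3 ∧ σ 3 = 2) ∨
    (σ 0 = 0 ∧ σ 1 = 2 ∧ σ 2 = 1 ∧ σ 3 = 3) ∨
    (σ 0 = 0 ∧ σ 1 = 2 ∧ σ 2 = 3 ∧ σ 3 = 1) ∨
    (σ 0 = 0 ∧ σ 1 = 3 ∧ σ 2 = 1 ∧ σ 3 = 2) ∨
    (σ 0 = 0 ∧ σ 1 = 3 ∧ σ 2 = 2 ∧ σ 3 = 1) ∨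
    (σ 0 = 1 ∧ σ 1 = 0 ∧ σ 2 = 2 ∧ σ 3 = 3) ∨
    (σ 0 = 1 ∧ σ 1 = 0 ∧ σ 2 = 3 ∧ σ 3 = 2) ∨
    (σ 0 = 1 ∧ σ 1 = 2 ∧ σ 2 = 0 ∧ σ 3 = 3) ∨
    (σ 0 = 1 ∧ σ 1 = 2 ∧ σ 2 = 3 ∧ σ 3 = 0) ∨
    (σ 0 = 1 ∧ σ 1 = 3 ∧ σ 2 = 0 ∧ σ 3 = 2) ∨
    (σ 0 = 1 ∧ σ 1 = 3 ∧ σ 2 = 2 ∧ σ 3 = 0) ∨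
    (σ 0 = 2 ∧ σ 1 = 0 ∧ σ 2 = 1 ∧ σ 3 = 3) ∨
    (σ 0 = 2 ∧ σ 1 = 0 ∧ σ 2 = 3 ∧ σ 3 = 1) ∨
    (σ 0 = 2 ∧ σ 1 = 1 ∧ σ 2 = 0 ∧ σ 3 = 3) ∨
    (σ 0 = 2 ∧ σ 1 = 1 ∧ σ 2 = 3 ∧ σ 3 = 0) ∨
    (σ 0 = 2 ∧ σ 1 = 3 ∧ σ 2 = 0 ∧ σ 3 = 1) ∨
    (σ 0 = 2 ∧ σ 1 = 3 ∧ σ 2 = 1 ∧ σ 3 = 0) ∨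
    (σ 0 = 3 ∧ σ 1 = 0 ∧ σ 2 = 1 ∧ σ 3 = 2) ∨
    (σ 0 = 3 ∧ σ 1 = 0 ∧ σ 2 = 2 ∧ σ 3 = 1) ∨
    (σ 0 = 3 ∧ σ 1 = 1 ∧ σ 2 = 0 ∧ σ 3 = 2) ∨
    (σ 0 = 3 ∧ σ 1 = 1 ∧ σ 2 = 2 ∧ σ 3 = 0) ∨
    (σ 0 = 3 ∧ σ 1 = 2 ∧ σ 2 = 0 ∧ σ 3 = 1) ∨
    (σ 0 = 3 ∧ σ 1 = 2 ∧ σ 2 = 1 ∧ σ 3 = 0) := by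
  rcases fin4 (σ 0) with e0|e0|e0|e0 <;> rcases fin4 (σ 1) with e1|e1|e1|e1 <;>
    rcases fin4 (σ 2) with e2|e2|e2|e2 <;> rcases fin4 (σ 3) with e3|e3|e3|e3 <;>
    first
      | exact absurd (σ.injective (e0.trans e1.symm)) (by decide)
      | exact absurd (σ.injective (e0.trans e2.symm)) (by decide)
      | exact absurd (σ.injective (e0.trans e3.symm)) (by decide)
      | exact absurd (σ.injective (e1.trans e2.symm)) (by decide)
      | exact absurd (σ.injective (e1.trans e3.symm)) (by decide)
      | exact absurd (σ.injective (e2.trans e3.symm)) (by decide)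
      | exact Or.inl ⟨e0,e1,e2,e3⟩
      | exact Or.inr (Or.inl ⟨e0,e1,e2,e3⟩)
      | exact Or.inr (Or.inr (Or.inl ⟨e0,e1,e2,e3⟩))
      | exact Or.inr (Or.inr (Or.inr (Or.inl ⟨e0,e1,e2,e3⟩)))
      | exact Or.inr (Or.inr (Or.inr (Or.inr (Or.inl ⟨e0,e1,e2,e3⟩))))
      | exact Or.inr (Or.inr (Or.inr (Or.inr (Or.inr (Or.inl ⟨e0,e1,e2,e3⟩)))))
      | exact Or.inr (Or.inr (Or.inr (Or.inr (Or.inr (Or.inr (Or.inl ⟨e0,e1,e2,e3⟩))))))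
      | exact Or.inr (Or.inr (Or.inr (Or.inr (Or.inr (Or.inr (Or.inr (Or.inl ⟨e0,e1,e2,e3⟩)))))))
      | exact Or.inr (Or.inr (Or.inr (Or.inr (Or.inr (Or.inr (Or.inr (Or.inr (Or.inl ⟨e0,e1,e2,e3⟩))))))))
      | exact Or.inr (Or.inr (Or.inr (Or.inr (Or.inr (Or.inr (Or.inr (Or.inr (Or.inr (Or.inl ⟨e0,e1,e2,e3⟩)))))))))
      | exact Or.inr (Or.inr (Or.inr (Or.inr (Or.inr (Or.inr (Or.inr (Or.inr (Or.inr (Or.inr (Or.inl ⟨e0,e1,e2,e3⟩))))))))))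
      | exact Or.inr (Or.inr (Or.inr (Or.inr (Or.inr (Or.inr (Or.inr (Or.inr (Or.inr (Or.inr (Or.inr (Or.inl ⟨e0,e1,e2,e3⟩)))))))))))
      | exact Or.inr (Or.inr (Or.inr (Or.inr (Or.inr (Or.inr (Or.inr (Or.inr (Or.inr (Or.inr (Or.inr (Or.inr (Or.inl ⟨e0,e1,e2,e3⟩))))))))))))
      | exact Or.inr (Or.inr (Or.inr (Or.inr (Or.inr (Or.inr (Or.inr (Or.inr (Or.inr (Or.inr (Or.inr (Or.inr (Or.inr (Or.inl ⟨e0,e1,e2,e3⟩)))))))))))))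
      | exact Or.inr (Or.inr (Or.inr (Or.inr (Or.inr (Or.inr (Or.inr (Or.inr (Or.inr (Or.inr (Or.inr (Or.inr (Or.inr (Or.inr (Or.inl ⟨e0,e1,e2,e3⟩))))))))))))))
      | exact Or.inr (Or.inr (Or.inr (Or.inr (Or.inr (Or.inr (Or.inr (Or.inr (Or.inr (Or.inr (Or.inr (Or.inr (Or.inr (Or.inr (Or.inr (Or.inl ⟨e0,e1,e2,e3⟩)))))))))))))))
      | exact Or.inr (Or.inr (Or.inr (Or.inr (Or.inr (Or.inr (Or.inr (Or.inr (Or.inr (Or.inr (Or.inr (Or.inr (Or.inr (Or.inr (Or.inr (Or.inr (Or.inl ⟨e0,e1,e2,e3⟩))))))))))))))))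
      | exact Or.inr (Or.inr (Or.inr (Or.inr (Or.inr (Or.inr (Or.inr (Or.inr (Or.inr (Or.inr (Or.inr (Or.inr (Or.inr (Or.inr (Or.inr (Or.inr (Or.inr (Or.inl ⟨e0,e1,e2,e3⟩)))))))))))))))))
      | exact Or.inr (Or.inr (Or.inr (Or.inr (Or.inr (Or.inr (Or.inr (Or.inr (Or.inr (Or.inr (Or.inr (Or.inr (Or.inr (Or.inr (Or.inr (Or.inr (Or.inr (Or.inr (Or.inl ⟨e0,e1,e2,e3⟩))))))))))))))))))
      | exact Or.inr (Or.inr (Or.inr (Or.inr (Or.inr (Or.inr (Or.inr (Or.inr (Or.inr (Or.inr (Or.inr (Or.inr (Or.inr (Or.inr (Or.inr (Or.inr (Or.inr (Or.inr (Or.inr (Or.inl ⟨e0,e1,e2,e3⟩)))))))))))))))))))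
      | exact Or.inr (Or.inr (Or.inr (Or.inr (Or.inr (Or.inr (Or.inr (Or.inr (Or.inr (Or.inr (Or.inr (Or.inr (Or.inr (Or.inr (Or.inr (Or.inr (Or.inr (Or.inr (Or.inr (Or.inr (Or.inl ⟨e0,e1,e2,e3⟩))))))))))))))))))))
      | exact Or.inr (Or.inr (Or.inr (Or.inr (Or.inr (Or.inr (Or.inr (Or.inr (Or.inr (Or.inr (Or.inr (Or.inr (Or.inr (Or.inr (Or.inr (Or.inr (Or.inr (Or.inr (Or.inr (Or.inr (Or.inr (Or.inl ⟨e0,e1,e2,e3⟩)))))))))))))))))))))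
      | exact Or.inr (Or.inr (Or.inr (Or.inr (Or.inr (Or.inr (Or.inr (Or.inr (Or.inr (Or.inr (Or.inr (Or.inr (Or.inr (Or.inr (Or.inr (Or.inr (Or.inr (Or.inr (Or.inr (Or.inr (Or.inr (Or.inr (Or.inl ⟨e0,e1,e2,e3⟩))))))))))))))))))))))
      | exact Or.inr (Or.inr (Or.inr (Or.inr (Or.inr (Or.inr (Or.inr (Or.inr (Or.inr (Or.inr (Or.inr (Or.inr (Or.inr (Or.inr (Or.inr (Or.inr (Or.inr (Or.inr (Or.inr (Or.inr (Or.inr (Or.inr (Or.inr (⟨e0,e1,e2,e3⟩)))))))))))))))))))))))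

private lemma mkRev (a : Fin 4 → ℕ) (σ : Equiv.Perm (Fin 4))
    (g0 : a (σ 0) = a 3) (g1 : a (σ 1) = a 2) (g2 : a (σ 2) = a 1) (g3 : a (σ 3) = a 0) :
    ∀ j : Fin 4, a (σ j) = a j.rev := by
  intro j
  rcases fin4 j with rfl|rfl|rfl|rfl
  · rw [(by decide : (0:Fin 4).rev = 3)]; exact g0
  · rw [(by decide : (1:Fin 4).rev = 2)]; exact g1
  · rw [(by decide : (2:Fin 4).rev = 1)]; exact g2
  · rw [(by decide : (3:Fin 4).rev = 0)]; exact g3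

private lemma mkPerf (a : Fin 4 → ℕ) (σ : Equiv.Perm (Fin 4)) (k : ℕ)
    (g0 : a 0 = k * a (σ 0)) (g1 : a (σ 1) = k * a 1)
    (g2 : a 2 = k * a (σ 2)) (g3 : a (σ 3) = k * a 3) :
    IsPerfect (n := 3) a σ k := by
  intro j
  rcases fin4 j with rfl|rfl|rfl|rfl
  · exact ⟨fun _ => g0, fun h => absurd h (by decide)⟩
  · exact ⟨fun h => absurd h (by decide), fun _ => g1⟩
  · exact ⟨fun _ => g2, fun h => absurd h (by decide)⟩
  · exact ⟨fun h => absurd h (by decide), fun _ => g3⟩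

/-- A 4-digit `(σ,k)`-permutiple is symmetric iff it is perfect or its permuted
digit string is the reversal of its digit string (`a_{σ(j)} = a_{3−j}` for all `j`,
so that it is a `k`-reverse multiple). -/
theorem stmt15 (a : Fin 4 → ℕ) (σ : Equiv.Perm (Fin 4)) (k : ℕ)
    (h : IsPermutiple (n := 3) a σ k) :
    IsSymmetric (n := 3) a σ ↔
      (IsPerfect (n := 3) a σ k ∨ ∀ j : Fin 4, a (σ j) = a j.rev) := by
  obtain ⟨hpos, hlast, hk1, hE⟩ := h
  have hp0 := hpos 0
  have hp1 := hpos 1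
  have hp2 := hpos 2
  have hp3 := hpos 3
  have hl : 2 ≤ a 3 := hlast
  have hk' : 2 ≤ k := hk1
  have c0 : (1:ℤ) ≤ (a 0 : ℤ) := by exact_mod_cast hp0
  have c1 : (1:ℤ) ≤ (a 1 : ℤ) := by exact_mod_cast hp1
  have c2 : (1:ℤ) ≤ (a 2 : ℤ) := by exact_mod_cast hp2
  have c3 : (1:ℤ) ≤ (a 3 : ℤ) := by exact_mod_cast hp3
  have c3' : (2:ℤ) ≤ (a 3 : ℤ) := by exact_mod_cast hl
  have ck : (2:ℤ) ≤ (k : ℤ) := by exact_mod_cast hk'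
  have hdig : digitsQ a = [(a 0 : ℚ), a 1, a 2, a 3] := by
    simp [digitsQ, List.ofFn_succ]
  have hdigb : digitsQ (a ∘ σ) = [(a (σ 0) : ℚ), a (σ 1), a (σ 2), a (σ 3)] := by
    simp [digitsQ, List.ofFn_succ, Function.comp]
  rw [hdig, hdigb] at hE
  have EN := Eint (a 0) (a 1) (a 2) (a 3) (a (σ 0)) (a (σ 1)) (a (σ 2)) (a (σ 3)) k
    hp1 hp2 hp3 (hpos _) (hpos _) (hpos _) hE
  constructor
  · intro hsym
    have hs0 := hsym 0
    rw [(by decide : (0:Fin 4).rev = 3)] at hs0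
    rcases perm4 σ with ⟨e0,e1,e2,e3⟩|⟨e0,e1,e2,e3⟩|⟨e0,e1,e2,e3⟩|⟨e0,e1,e2,e3⟩|⟨e0,e1,e2,e3⟩|⟨e0,e1,e2,e3⟩|⟨e0,e1,e2,e3⟩|⟨e0,e1,e2,e3⟩|⟨e0,e1,e2,e3⟩|⟨e0,e1,e2,e3⟩|⟨e0,e1,e2,e3⟩|⟨e0,e1,e2,e3⟩|⟨e0,e1,e2,e3⟩|⟨e0,e1,e2,e3⟩|⟨e0,e1,e2,e3⟩|⟨e0,e1,e2,e3⟩|⟨e0,e1,e2,e3⟩|⟨e0,e1,e2,e3⟩|⟨e0,e1,e2,e3⟩|⟨e0,e1,e2,e3⟩|⟨e0,e1,e2,e3⟩|⟨e0,e1,e2,e3⟩|⟨e0,e1,e2,e3⟩|⟨e0,e1,e2,e3⟩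
    · rw [e0, e1, e2, e3] at EN
      exact (coreContra (a 0 : ℤ) (a 1) (a 2) (a 3) ((a 0 : ℕ)) (a 1) (a 2) (a 3) k
        c0 c1 c2 c3 c1 c2 c3 (le_refl _) ck (by exact_mod_cast EN)).elim
    · rw [e0, e1, e2, e3] at EN
      exact (coreContra (a 0 : ℤ) (a 1) (a 2) (a 3) ((a 0 : ℕ)) (a 1) (a 3) (a 2) k
        c0 c1 c2 c3 c1 c3 c2 (le_refl _) ck (by exact_mod_cast EN)).elim
    · rw [e0, e1, e2, e3] at EN
      exact (coreContra (a 0 : ℤ) (a 1) (a 2) (a 3) ((a 0 : ℕ)) (a 2) (a 1) (a 3) k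
        c0 c1 c2 c3 c2 c1 c3 (le_refl _) ck (by exact_mod_cast EN)).elim
    · rw [e0, e1, e2, e3] at EN
      exact (coreContra (a 0 : ℤ) (a 1) (a 2) (a 3) ((a 0 : ℕ)) (a 2) (a 3) (a 1) k
        c0 c1 c2 c3 c2 c3 c1 (le_refl _) ck (by exact_mod_cast EN)).elim
    · rw [e0, e1, e2, e3] at EN
      exact (coreContra (a 0 : ℤ) (a 1) (a 2) (a 3) ((a 0 : ℕ)) (a 3) (a 1) (a 2) k
        c0 c1 c2 c3 c3 c1 c2 (le_refl _) ck (by exact_mod_cast EN)).elim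
    · rw [e0, e1, e2, e3] at EN
      exact (coreContra (a 0 : ℤ) (a 1) (a 2) (a 3) ((a 0 : ℕ)) (a 3) (a 2) (a 1) k
        c0 c1 c2 c3 c3 c2 c1 (le_refl _) ck (by exact_mod_cast EN)).elim
    · rw [e0, e1, e2, e3] at EN
      rw [e0, e3] at hs0
      have hq : a 0 = a 1 := Nat.eq_of_mul_eq_mul_right hp3 hs0
      exact (coreContra (a 0 : ℤ) (a 1) (a 2) (a 3) ((a 1 : ℕ)) (a 0) (a 2) (a 3) k
        c0 c1 c2 c3 c0 c2 c3 (by exact_mod_cast hq.le) ck (by exact_mod_cast EN)).elim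
    · rw [e0, e3] at hs0
      rw [e0, e1, e2, e3] at EN
      obtain ⟨hz1, hz2⟩ := coreB1 (a 0 : ℤ) (a 1) (a 2) (a 3) k c0 c1 c2 c3' ck
        (by exact_mod_cast hs0) (by exact_mod_cast EN)
      have n1 : a 0 = k * a 1 := by exact_mod_cast hz1
      have n2 : a 2 = k * a 3 := by exact_mod_cast hz2
      refine Or.inl (mkPerf a σ k ?_ ?_ ?_ ?_)
      · rw [e0]; exact n1
      · rw [e1]; exact n1
      · rw [e2]; exact n2
      · rw [e3]; exact n2
    · rw [e0, e1, e2, e3] at EN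
      rw [e0, e3] at hs0
      have hq : a 0 = a 1 := Nat.eq_of_mul_eq_mul_right hp3 hs0
      exact (coreContra (a 0 : ℤ) (a 1) (a 2) (a 3) ((a 1 : ℕ)) (a 2) (a 0) (a 3) k
        c0 c1 c2 c3 c2 c0 c3 (by exact_mod_cast hq.le) ck (by exact_mod_cast EN)).elim
    · rw [e0, e3] at hs0
      rw [Nat.mul_comm (a 1) (a 0)] at hs0
      have hq : a 3 = a 1 := Nat.eq_of_mul_eq_mul_left hp0 hs0
      refine Or.inr (mkRev a σ ?_ ?_ ?_ ?_)
      · rw [e0]; exact hq.symm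
      · rw [e1]
      · rw [e2]; exact hq
      · rw [e3]
    · rw [e0, e3] at hs0
      rw [e0, e1, e2, e3] at EN
      obtain ⟨hz1, hz2, hz3⟩ := coreB2 (a 0 : ℤ) (a 1) (a 2) (a 3) k c0 c1 c2 c3' ck
        (by exact_mod_cast hs0) (by exact_mod_cast EN)
      have n1 : a 0 = k * a 1 := by exact_mod_cast hz1
      have n2 : a 0 = a 3 := by exact_mod_cast hz2
      have n3 : a 2 = k * a 0 := by exact_mod_cast hz3
      refine Or.inl (mkPerf a σ k ?_ ?_ ?_ ?_)
      · rw [e0]; exact n1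
      · rw [e1, ← n2]; exact n1
      · rw [e2]; exact n3
      · rw [e3, ← n2]; exact n3
    · rw [e0, e3] at hs0
      rw [Nat.mul_comm (a 1) (a 0)] at hs0
      have hq : a 3 = a 1 := Nat.eq_of_mul_eq_mul_left hp0 hs0
      rw [e0, e1, e2, e3] at EN
      rw [← hq] at EN
      have hz := coreL1 (a 0 : ℤ) (a 3) (a 2) (a 3) k c0 c3 c2 c3' ck (by exact_mod_cast EN)
      have hq2 : a 3 = a 2 := by exact_mod_cast hz
      refine Or.inr (mkRev a σ ?_ ?_ ?_ ?_)
      · rw [e0]; exact hq.symm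
      · rw [e1]; exact hq2
      · rw [e2]; exact hq2.symm.trans hq
      · rw [e3]
    · rw [e0, e1, e2, e3] at EN
      rw [e0, e3] at hs0
      have hq : a 0 = a 2 := Nat.eq_of_mul_eq_mul_right hp3 hs0
      exact (coreContra (a 0 : ℤ) (a 1) (a 2) (a 3) ((a 2 : ℕ)) (a 0) (a 1) (a 3) k
        c0 c1 c2 c3 c0 c1 c3 (by exact_mod_cast hq.le) ck (by exact_mod_cast EN)).elim
    · rw [e0, e3] at hs0
      rw [Nat.mul_comm (a 2) (a 1)] at hs0
      rw [e0, e1, e2, e3] at EN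
      obtain ⟨hz1, hz2, hz3⟩ := coreB3 (a 0 : ℤ) (a 1) (a 2) (a 3) k c0 c1 c2 c3' ck
        (by exact_mod_cast hs0) (by exact_mod_cast EN)
      have n1 : a 0 = k * a 2 := by exact_mod_cast hz1
      have n2 : a 1 = k * a 3 := by exact_mod_cast hz2
      have n3 : a 1 = a 2 := by exact_mod_cast hz3
      refine Or.inl (mkPerf a σ k ?_ ?_ ?_ ?_)
      · rw [e0]; exact n1
      · rw [e1, n3]; exact n1
      · rw [e2, ← n3]; exact n2
      · rw [e3]; exact n2
    · rw [e0, e1, e2, e3] at EN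
      rw [e0, e3] at hs0
      have hq : a 0 = a 2 := Nat.eq_of_mul_eq_mul_right hp3 hs0
      exact (coreContra (a 0 : ℤ) (a 1) (a 2) (a 3) ((a 2 : ℕ)) (a 1) (a 0) (a 3) k
        c0 c1 c2 c3 c1 c0 c3 (by exact_mod_cast hq.le) ck (by exact_mod_cast EN)).elim
    · rw [e0, e3] at hs0
      rw [Nat.mul_comm (a 2) (a 0)] at hs0
      have hq : a 3 = a 2 := Nat.eq_of_mul_eq_mul_left hp0 hs0
      rw [e0, e1, e2, e3] at EN
      rw [← hq] at EN
      have hz := coreL1 (a 0 : ℤ) (a 1) (a 3) (a 3) k c0 c1 c3 c3' ck (by exact_mod_cast EN)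
      have hq2 : a 1 = a 3 := by exact_mod_cast hz
      refine Or.inr (mkRev a σ ?_ ?_ ?_ ?_)
      · rw [e0]; exact hq.symm
      · rw [e1]; exact hq2.trans hq
      · rw [e2]; exact hq2.symm
      · rw [e3]
    · rw [e0, e3] at hs0
      rw [Nat.mul_comm (a 2) (a 1)] at hs0
      rw [e0, e1, e2, e3] at EN
      exact (coreB4 (a 0 : ℤ) (a 1) (a 2) (a 3) k c0 c1 c2 c3' ck
        (by exact_mod_cast hs0) (by exact_mod_cast EN)).elim
    · rw [e0, e3] at hs0
      rw [Nat.mul_comm (a 2) (a 0)] at hs0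
      have hq : a 3 = a 2 := Nat.eq_of_mul_eq_mul_left hp0 hs0
      refine Or.inr (mkRev a σ ?_ ?_ ?_ ?_)
      · rw [e0]; exact hq.symm
      · rw [e1]; exact hq
      · rw [e2]
      · rw [e3]
    · rw [e0, e3] at hs0
      rw [Nat.mul_comm (a 0) (a 3)] at hs0
      have hq : a 0 = a 2 := Nat.eq_of_mul_eq_mul_left hp3 hs0
      refine Or.inr (mkRev a σ ?_ ?_ ?_ ?_)
      · rw [e0]
      · rw [e1]; exact hq
      · rw [e2]
      · rw [e3]; exact hq.symm
    · rw [e0, e3] at hs0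
      rw [Nat.mul_comm (a 0) (a 3)] at hs0
      have hq : a 0 = a 1 := Nat.eq_of_mul_eq_mul_left hp3 hs0
      rw [e0, e1, e2, e3] at EN
      rw [← hq] at EN
      have hz := coreL1 (a 0 : ℤ) (a 0) (a 2) (a 3) k c0 c0 c2 c3' ck (by exact_mod_cast EN)
      have hq2 : a 0 = a 2 := by exact_mod_cast hz
      refine Or.inr (mkRev a σ ?_ ?_ ?_ ?_)
      · rw [e0]
      · rw [e1]; exact hq2
      · rw [e2]; exact hq2.symm.trans hq
      · rw [e3]; exact hq.symm
    · rw [e0, e3] at hs0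
      rw [Nat.mul_comm (a 0) (a 3)] at hs0
      have hq : a 0 = a 2 := Nat.eq_of_mul_eq_mul_left hp3 hs0
      rw [e0, e1, e2, e3] at EN
      rw [← hq] at EN
      have hz := coreL1 (a 0 : ℤ) (a 1) (a 0) (a 3) k c0 c1 c0 c3' ck (by exact_mod_cast EN)
      have hq2 : a 1 = a 0 := by exact_mod_cast hz
      refine Or.inr (mkRev a σ ?_ ?_ ?_ ?_)
      · rw [e0]
      · rw [e1]; exact hq2.trans hq
      · rw [e2]; exact hq2.symm
      · rw [e3]; exact hq.symm
    · rw [e0, e1, e2, e3] at EN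
      have hz := coreL1 (a 0 : ℤ) (a 1) (a 2) (a 3) k c0 c1 c2 c3' ck (by exact_mod_cast EN)
      have hq2 : a 1 = a 2 := by exact_mod_cast hz
      refine Or.inr (mkRev a σ ?_ ?_ ?_ ?_)
      · rw [e0]
      · rw [e1]; exact hq2
      · rw [e2]; exact hq2.symm
      · rw [e3]
    · rw [e0, e3] at hs0
      rw [Nat.mul_comm (a 0) (a 3)] at hs0
      have hq : a 0 = a 1 := Nat.eq_of_mul_eq_mul_left hp3 hs0
      refine Or.inr (mkRev a σ ?_ ?_ ?_ ?_)
      · rw [e0]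
      · rw [e1]
      · rw [e2]; exact hq
      · rw [e3]; exact hq.symm
    · refine Or.inr (mkRev a σ ?_ ?_ ?_ ?_)
      · rw [e0]
      · rw [e1]
      · rw [e2]
      · rw [e3]
  · intro hd
    rcases hd with hperf | hrev
    · intro j
      have h0e := (hperf 0).1 (by decide)
      have h1o := (hperf 1).2 (by decide)
      have h2e := (hperf 2).1 (by decide)
      have h3o := (hperf 3).2 (by decide)
      rcases fin4 j with rfl|rfl|rfl|rfl
      · rw [(by decide : (0:Fin 4).rev = 3), h0e, h3o]; ring
      · rw [(by decide : (1:Fin 4).rev = 2), h2e, h1o]; ring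
      · rw [(by decide : (2:Fin 4).rev = 1), h2e, h1o]; ring
      · rw [(by decide : (3:Fin 4).rev = 0), h0e, h3o]; ring
    · intro j
      rw [hrev j, hrev j.rev, Fin.rev_rev, Nat.mul_comm]
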